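/- Let X be a compact, Hausdorff, totally disconnected topological space. Then X is extremally disconnected (the closure of every open subset of X is open) if and only if the Boolean algebra Clopens(X) of clopen subsets of X is complete, in the sense that every set S of clopen subsets of X has a least upper bound in Clopens(X) (there exists a clopen C that is a least upper bound of S with respect to inclusion). -/
import Mathlib


open TopologicalSpace in
/-- A Stone space (compact, Hausdorff, totally disconnected) is extremally
disconnected if and only if its Boolean algebra of clopen subsets is complete,
i.e. every set of clopens has a least upper bound. -/
theorem extremallyDisconnected_iff_clopens_complete (X : Type*) [TopologicalSpace X]
    [CompactSpace X] [T2Space X] [TotallyDisconnectedSpace X] :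
    ExtremallyDisconnected X ↔ ∀ S : Set (Clopens X), ∃ C : Clopens X, IsLUB S C := by
  constructor
  · intro hED S
    set U : Set X := ⋃ s ∈ S, (s : Set X) with hU
    have hUopen : IsOpen U := isOpen_biUnion fun s _ => s.isClopen.isOpen
    have hclopen : IsClopen (closure U) :=
      ⟨isClosed_closure, hED.open_closure U hUopen⟩
    refine ⟨⟨closure U, hclopen⟩, ?_, ?_⟩
    · intro s hs
      exact (Set.subset_biUnion_of_mem hs).trans subset_closure
    · intro D hD
      have hUD : U ⊆ (D : Set X) := Set.iUnion₂_subset fun s hs => hD hs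
      exact (closure_minimal hUD D.isClopen.isClosed : closure U ⊆ (D : Set X))
  · intro hC
    constructor
    intro U hUopen
    obtain ⟨C, hCub, hClub⟩ := hC {s : Clopens X | (s : Set X) ⊆ U}
    have hUC : U ⊆ (C : Set X) := by
      intro x hx
      obtain ⟨V, hV, hxV, hVU⟩ := compact_exists_isClopen_in_isOpen hUopen hx
      exact hCub (Set.mem_setOf.mpr hVU : (⟨V, hV⟩ : Clopens X) ∈ _) hxV
    have hclosureC : closure U ⊆ (C : Set X) :=
      closure_minimal hUC C.isClopen.isClosed
    have hCclosure : (C : Set X) ⊆ closure U := by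
      by_contra h
      obtain ⟨x, hxC, hxU⟩ := Set.not_subset.mp h
      obtain ⟨V, hV, hxV, hVU⟩ :=
        compact_exists_isClopen_in_isOpen isClosed_closure.isOpen_compl hxU
      have : C ≤ C ⊓ (⟨V, hV⟩ : Clopens X)ᶜ := by
        apply hClub
        intro s hs
        refine le_inf (hCub hs) ?_
        intro y hy
        have : y ∈ closure U := subset_closure (hs hy)
        exact fun hyV => hVU hyV this
      exact (this hxC).2 hxV
    have : closure U = (C : Set X) := le_antisymm hclosureC hCclosure
    rw [this]
    exact C.isClopen.isOpen
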